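/- Spanning lemma for relators in a linear monoidal category: Let K be a field and C a K-linear monoidal category. Suppose Web is a family of subsets Web(X,Y) ⊆ Hom(X,Y) such that for all objects X, Y the K-vector space Hom(X,Y) is spanned by Web(X,Y). Let R be a family of subsets R(X,Y) ⊆ Hom(X,Y). Let Rel be the smallest family of subsets of the Hom-spaces that contains R and is closed under the four operations f ↦ g ∘ f, f ↦ f ∘ g, f ↦ g ⊗ f, and f ↦ f ⊗ g, where g ranges over all webs (whenever the composite or tensor product is defined), and let ⟨R⟩ be the smallest family of K-subspaces of the Hom-spaces that contains R and is closed under the same four operations with g ranging over all morphisms of C. Then for all objects X and Y, the K-span of Rel(X,Y) equals ⟨R⟩(X,Y). -/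

import Mathlib

open CategoryTheory

universe v u

/-- `Rel` : the smallest family of subsets of the Hom-spaces of a monoidal category that
contains the family `Rl` and is closed under the four operations `f ↦ f ≫ g`, `f ↦ g ≫ f`,
`f ↦ f ⊗ g`, `f ↦ g ⊗ f`, where `g` ranges over all *webs* (elements of the family `Web`),
whenever the composite or tensor product is defined. -/
inductive RelClosure {C : Type u} [Category.{v} C] [MonoidalCategory C]
    (Web Rl : ∀ X Y : C, Set (X ⟶ Y)) : ∀ X Y : C, (X ⟶ Y) → Prop
  | base {X Y : C} {f : X ⟶ Y} (hf : f ∈ Rl X Y) : RelClosure Web Rl X Y f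
  | comp_right {X Y Z : C} {f : X ⟶ Y} (g : Y ⟶ Z) (hf : RelClosure Web Rl X Y f)
      (hg : g ∈ Web Y Z) : RelClosure Web Rl X Z (f ≫ g)
  | comp_left {X Y Z : C} (g : X ⟶ Y) {f : Y ⟶ Z} (hf : RelClosure Web Rl Y Z f)
      (hg : g ∈ Web X Y) : RelClosure Web Rl X Z (g ≫ f)
  | tensor_right {X Y X' Y' : C} {f : X ⟶ Y} (g : X' ⟶ Y') (hf : RelClosure Web Rl X Y f)
      (hg : g ∈ Web X' Y') :
      RelClosure Web Rl (MonoidalCategory.tensorObj X X') (MonoidalCategory.tensorObj Y Y')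
        (MonoidalCategory.tensorHom f g)
  | tensor_left {X Y X' Y' : C} (g : X' ⟶ Y') {f : X ⟶ Y} (hf : RelClosure Web Rl X Y f)
      (hg : g ∈ Web X' Y') :
      RelClosure Web Rl (MonoidalCategory.tensorObj X' X) (MonoidalCategory.tensorObj Y' Y)
        (MonoidalCategory.tensorHom g f)

/-- `⟨Rl⟩` : the smallest family of `K`-subspaces of the Hom-spaces of a `K`-linear monoidal
category that contains the family `Rl` and is closed under the four operations `f ↦ f ≫ g`,
`f ↦ g ≫ f`, `f ↦ f ⊗ g`, `f ↦ g ⊗ f`, where `g` ranges over *all* morphisms of the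
category.  (The subspace conditions are the `zero`, `add` and `smul` constructors.) -/
inductive RelSpan (K : Type*) [Field K] {C : Type u} [Category.{v} C] [Preadditive C]
    [CategoryTheory.Linear K C] [MonoidalCategory C]
    (Rl : ∀ X Y : C, Set (X ⟶ Y)) : ∀ X Y : C, (X ⟶ Y) → Prop
  | base {X Y : C} {f : X ⟶ Y} (hf : f ∈ Rl X Y) : RelSpan K Rl X Y f
  | zero {X Y : C} : RelSpan K Rl X Y 0
  | add {X Y : C} {f g : X ⟶ Y} (hf : RelSpan K Rl X Y f) (hg : RelSpan K Rl X Y g) :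
      RelSpan K Rl X Y (f + g)
  | smul {X Y : C} (a : K) {f : X ⟶ Y} (hf : RelSpan K Rl X Y f) : RelSpan K Rl X Y (a • f)
  | comp_right {X Y Z : C} {f : X ⟶ Y} (g : Y ⟶ Z) (hf : RelSpan K Rl X Y f) :
      RelSpan K Rl X Z (f ≫ g)
  | comp_left {X Y Z : C} (g : X ⟶ Y) {f : Y ⟶ Z} (hf : RelSpan K Rl Y Z f) :
      RelSpan K Rl X Z (g ≫ f)
  | tensor_right {X Y X' Y' : C} {f : X ⟶ Y} (g : X' ⟶ Y') (hf : RelSpan K Rl X Y f) :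
      RelSpan K Rl (MonoidalCategory.tensorObj X X') (MonoidalCategory.tensorObj Y Y')
        (MonoidalCategory.tensorHom f g)
  | tensor_left {X Y X' Y' : C} (g : X' ⟶ Y') {f : X ⟶ Y} (hf : RelSpan K Rl X Y f) :
      RelSpan K Rl (MonoidalCategory.tensorObj X' X) (MonoidalCategory.tensorObj Y' Y)
        (MonoidalCategory.tensorHom g f)


set_option linter.unusedSectionVars false

section Aux

open MonoidalCategory

variable (K : Type*) [Field K] {C : Type u} [Category.{v} C] [Preadditive C]
    [CategoryTheory.Linear K C] [MonoidalCategory C] [MonoidalPreadditive C]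
    [MonoidalLinear K C]

theorem tensorHom_smul' {X Y X' Y' : C} (f : X ⟶ Y) (a : K) (g : X' ⟶ Y') :
    tensorHom f (a • g) = a • tensorHom f g := by
  simp [MonoidalCategory.tensorHom_def, Linear.comp_smul]

theorem smul_tensorHom' {X Y X' Y' : C} (a : K) (f : X ⟶ Y) (g : X' ⟶ Y') :
    tensorHom (a • f) g = a • tensorHom f g := by
  simp [MonoidalCategory.tensorHom_def, Linear.smul_comp]

variable (Web Rl : ∀ X Y : C, Set (X ⟶ Y))
    (hWeb : ∀ X Y : C, Submodule.span K (Web X Y) = ⊤)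

def sRC (X Y : C) : Submodule K (X ⟶ Y) :=
  Submodule.span K {f : X ⟶ Y | RelClosure Web Rl X Y f}

theorem relClosure_mem_span {X Y : C} {f : X ⟶ Y} (hf : RelClosure Web Rl X Y f) :
    f ∈ sRC K Web Rl X Y :=
  Submodule.subset_span hf

include hWeb in
theorem comp_right_mem_span {X Y Z : C} (g : Y ⟶ Z) {f : X ⟶ Y} (hf : f ∈ sRC K Web Rl X Y) :
    f ≫ g ∈ sRC K Web Rl X Z := by
  have hg : g ∈ Submodule.span K (Web Y Z) := by rw [hWeb]; trivial
  induction hg using Submodule.span_induction with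
  | mem g hgw =>
    induction hf using Submodule.span_induction with
    | mem f hfc => exact Submodule.subset_span (RelClosure.comp_right g hfc hgw)
    | zero => rw [Limits.zero_comp]; exact Submodule.zero_mem _
    | add f₁ f₂ _ _ h₁ h₂ => rw [Preadditive.add_comp]; exact Submodule.add_mem _ h₁ h₂
    | smul a f₁ _ h₁ => rw [Linear.smul_comp]; exact Submodule.smul_mem _ a h₁
  | zero => rw [Limits.comp_zero]; exact Submodule.zero_mem _
  | add g₁ g₂ _ _ h₁ h₂ => rw [Preadditive.comp_add]; exact Submodule.add_mem _ h₁ h₂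
  | smul a g₁ _ h₁ => rw [Linear.comp_smul]; exact Submodule.smul_mem _ a h₁

include hWeb in
theorem comp_left_mem_span {X Y Z : C} (g : X ⟶ Y) {f : Y ⟶ Z} (hf : f ∈ sRC K Web Rl Y Z) :
    g ≫ f ∈ sRC K Web Rl X Z := by
  have hg : g ∈ Submodule.span K (Web X Y) := by rw [hWeb]; trivial
  induction hg using Submodule.span_induction with
  | mem g hgw =>
    induction hf using Submodule.span_induction with
    | mem f hfc => exact Submodule.subset_span (RelClosure.comp_left g hfc hgw)
    | zero => rw [Limits.comp_zero]; exact Submodule.zero_mem _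
    | add f₁ f₂ _ _ h₁ h₂ => rw [Preadditive.comp_add]; exact Submodule.add_mem _ h₁ h₂
    | smul a f₁ _ h₁ => rw [Linear.comp_smul]; exact Submodule.smul_mem _ a h₁
  | zero => rw [Limits.zero_comp]; exact Submodule.zero_mem _
  | add g₁ g₂ _ _ h₁ h₂ => rw [Preadditive.add_comp]; exact Submodule.add_mem _ h₁ h₂
  | smul a g₁ _ h₁ => rw [Linear.smul_comp]; exact Submodule.smul_mem _ a h₁

include hWeb in
theorem tensor_right_mem_span {X Y X' Y' : C} (g : X' ⟶ Y') {f : X ⟶ Y} (hf : f ∈ sRC K Web Rl X Y) :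
    tensorHom f g ∈ sRC K Web Rl (tensorObj X X') (tensorObj Y Y') := by
  have hg : g ∈ Submodule.span K (Web X' Y') := by rw [hWeb]; trivial
  induction hg using Submodule.span_induction with
  | mem g hgw =>
    induction hf using Submodule.span_induction with
    | mem f hfc => exact Submodule.subset_span (RelClosure.tensor_right g hfc hgw)
    | zero => rw [MonoidalPreadditive.zero_tensor]; exact Submodule.zero_mem _
    | add f₁ f₂ _ _ h₁ h₂ =>
        rw [MonoidalPreadditive.add_tensor]; exact Submodule.add_mem _ h₁ h₂
    | smul a f₁ _ h₁ => rw [smul_tensorHom']; exact Submodule.smul_mem _ a h₁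
  | zero => rw [MonoidalPreadditive.tensor_zero]; exact Submodule.zero_mem _
  | add g₁ g₂ _ _ h₁ h₂ =>
      rw [MonoidalPreadditive.tensor_add]; exact Submodule.add_mem _ h₁ h₂
  | smul a g₁ _ h₁ => rw [tensorHom_smul']; exact Submodule.smul_mem _ a h₁

include hWeb in
theorem tensor_left_mem_span {X Y X' Y' : C} (g : X' ⟶ Y') {f : X ⟶ Y} (hf : f ∈ sRC K Web Rl X Y) :
    tensorHom g f ∈ sRC K Web Rl (tensorObj X' X) (tensorObj Y' Y) := by
  have hg : g ∈ Submodule.span K (Web X' Y') := by rw [hWeb]; trivial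
  induction hg using Submodule.span_induction with
  | mem g hgw =>
    induction hf using Submodule.span_induction with
    | mem f hfc => exact Submodule.subset_span (RelClosure.tensor_left g hfc hgw)
    | zero => rw [MonoidalPreadditive.tensor_zero]; exact Submodule.zero_mem _
    | add f₁ f₂ _ _ h₁ h₂ =>
        rw [MonoidalPreadditive.tensor_add]; exact Submodule.add_mem _ h₁ h₂
    | smul a f₁ _ h₁ => rw [tensorHom_smul']; exact Submodule.smul_mem _ a h₁
  | zero => rw [MonoidalPreadditive.zero_tensor]; exact Submodule.zero_mem _
  | add g₁ g₂ _ _ h₁ h₂ =>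
      rw [MonoidalPreadditive.add_tensor]; exact Submodule.add_mem _ h₁ h₂
  | smul a g₁ _ h₁ => rw [smul_tensorHom']; exact Submodule.smul_mem _ a h₁

include hWeb in
theorem relSpan_mem_span {X Y : C} {f : X ⟶ Y} (hf : RelSpan K Rl X Y f) :
    f ∈ sRC K Web Rl X Y := by
  induction hf with
  | base hf => exact Submodule.subset_span (RelClosure.base hf)
  | zero => exact Submodule.zero_mem _
  | add _ _ h₁ h₂ => exact Submodule.add_mem _ h₁ h₂
  | smul a _ h₁ => exact Submodule.smul_mem _ a h₁
  | comp_right g _ h₁ => exact comp_right_mem_span K Web Rl hWeb g h₁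
  | comp_left g _ h₁ => exact comp_left_mem_span K Web Rl hWeb g h₁
  | tensor_right g _ h₁ => exact tensor_right_mem_span K Web Rl hWeb g h₁
  | tensor_left g _ h₁ => exact tensor_left_mem_span K Web Rl hWeb g h₁

theorem relClosure_relSpan {X Y : C} {f : X ⟶ Y} (hf : RelClosure Web Rl X Y f) :
    RelSpan K Rl X Y f := by
  induction hf with
  | base hf => exact RelSpan.base hf
  | comp_right g _ _ h => exact RelSpan.comp_right g h
  | comp_left g _ _ h => exact RelSpan.comp_left g h
  | tensor_right g _ _ h => exact RelSpan.tensor_right g h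
  | tensor_left g _ _ h => exact RelSpan.tensor_left g h

end Aux

/-- **Spanning lemma for relators in a linear monoidal category.**
Let `K` be a field and `C` a `K`-linear monoidal category.  Suppose `Web` is a family of
subsets `Web X Y ⊆ Hom(X, Y)` such that for all objects `X, Y` the `K`-vector space
`Hom(X, Y)` is spanned by `Web X Y`.  Let `Rl` be a family of subsets
`Rl X Y ⊆ Hom(X, Y)`.  Then for all objects `X` and `Y`, the `K`-span of `Rel X Y` equals
`⟨Rl⟩ X Y`. -/
theorem span_relClosure_eq_relSpan (K : Type*) [Field K]
    {C : Type u} [Category.{v} C] [Preadditive C] [CategoryTheory.Linear K C]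
    [MonoidalCategory C] [MonoidalPreadditive C] [MonoidalLinear K C]
    (Web Rl : ∀ X Y : C, Set (X ⟶ Y))
    (hWeb : ∀ X Y : C, Submodule.span K (Web X Y) = ⊤) :
    ∀ X Y : C,
      (Submodule.span K {f : X ⟶ Y | RelClosure Web Rl X Y f} : Set (X ⟶ Y)) =
        {f : X ⟶ Y | RelSpan K Rl X Y f} := by
  intro X Y
  ext f
  constructor
  · intro hf
    induction hf using Submodule.span_induction with
    | mem f hfc => exact relClosure_relSpan K Web Rl hfc
    | zero => exact RelSpan.zero
    | add _ _ _ _ h₁ h₂ => exact RelSpan.add h₁ h₂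
    | smul a _ _ h₁ => exact RelSpan.smul a h₁
  · exact fun hf => relSpan_mem_span K Web Rl hWeb hf
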